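/- For sets S_1, S_2 of positive integers, the number of n x k lonesum 0-1 matrices with no all-zero rows or columns, in which the number of rows of each type lies in S_1 and the number of columns of each type lies in S_2, equals sum over m from 0 to min(n,k) of m! {n brace m}_{S_1} * m! {k brace m}_{S_2}. -/

import Mathlib

open scoped Classical

open Finset Function

/-- The `S`-restricted Stirling number of the second kind: the number of partitions of
`[n]` into exactly `k` nonempty blocks, all of whose sizes lie in `S`. -/
noncomputable def sStirling (S : Set ℕ) (n k : ℕ) : ℕ :=
  Nat.card {P : Finpartition (Finset.univ : Finset (Fin n)) //
    P.parts.card = k ∧ ∀ b ∈ P.parts, b.card ∈ S}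

/-- The formal power series `E_S(x) = ∑_{s ∈ S} x^s / s!`. -/
noncomputable def ES (S : Set ℕ) : PowerSeries ℚ :=
  PowerSeries.mk fun n => if n ∈ S then ((n.factorial : ℚ))⁻¹ else 0

/-- A 0-1 matrix (with entries in `Bool`) is lonesum iff it avoids both `2×2`
permutation matrices as submatrices. -/
def IsLonesum {n k : ℕ} (M : Fin n → Fin k → Bool) : Prop :=
  ∀ i₁ i₂ : Fin n, ∀ j₁ j₂ : Fin k, i₁ ≠ i₂ → j₁ ≠ j₂ →
    ¬(M i₁ j₁ = true ∧ M i₂ j₂ = true ∧ M i₁ j₂ = false ∧ M i₂ j₁ = false)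

namespace LonesumAux

/-! ### rank in a finset of naturals -/

noncomputable def rkIn (T : Finset ℕ) (v : ℕ) : ℕ := (T.filter (· < v)).card

lemma rkIn_lt_rkIn {T : Finset ℕ} {v w : ℕ} (hv : v ∈ T) (hvw : v < w) :
    rkIn T v < rkIn T w := by
  apply Finset.card_lt_card
  constructor
  · intro x hx
    simp only [Finset.mem_filter] at hx ⊢
    exact ⟨hx.1, by omega⟩
  · intro hsub
    have : v ∈ T.filter (· < w) := Finset.mem_filter.2 ⟨hv, hvw⟩
    have := hsub this
    simp only [Finset.mem_filter] at this
    omega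

lemma rkIn_lt_iff {T : Finset ℕ} {v w : ℕ} (hv : v ∈ T) (hw : w ∈ T) :
    rkIn T v < rkIn T w ↔ v < w := by
  constructor
  · intro h
    by_contra hc
    push_neg at hc
    rcases eq_or_lt_of_le hc with h' | h'
    · subst h'; omega
    · have := rkIn_lt_rkIn hw h'
      omega
  · intro h; exact rkIn_lt_rkIn hv h

lemma rkIn_inj {T : Finset ℕ} {v w : ℕ} (hv : v ∈ T) (hw : w ∈ T)
    (h : rkIn T v = rkIn T w) : v = w := by
  rcases lt_trichotomy v w with h' | h' | h'
  · have := rkIn_lt_rkIn hv h'; omega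
  · exact h'
  · have := rkIn_lt_rkIn hw h'; omega

lemma rkIn_lt_card {T : Finset ℕ} {v : ℕ} (hv : v ∈ T) : rkIn T v < T.card := by
  apply Finset.card_lt_card
  constructor
  · exact Finset.filter_subset _ _
  · intro hsub
    have := hsub hv
    simp at this

lemma rkIn_surj {T : Finset ℕ} {t : ℕ} (ht : t < T.card) : ∃ v ∈ T, rkIn T v = t := by
  have hbij : Function.Bijective (fun v : ↥T => (⟨rkIn T v.1, rkIn_lt_card v.2⟩ : Fin T.card)) := by
    rw [Fintype.bijective_iff_injective_and_card]
    constructor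
    · intro a b hab
      have : rkIn T a.1 = rkIn T b.1 := congrArg Fin.val hab
      exact Subtype.ext (rkIn_inj a.2 b.2 this)
    · simp
  obtain ⟨v, hv⟩ := hbij.2 ⟨t, ht⟩
  exact ⟨v.1, v.2, congrArg Fin.val hv⟩




variable {n k : ℕ}

def tr (M : Fin n → Fin k → Bool) : Fin k → Fin n → Bool := fun j i => M i j

lemma lonesum_tr {M : Fin n → Fin k → Bool} (h : IsLonesum M) : IsLonesum (tr M) := by
  intro j₁ j₂ i₁ i₂ hj hi ⟨a, b, c, d⟩
  exact h i₁ i₂ j₁ j₂ hi hj ⟨a, b, d, c⟩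

noncomputable def supp (M : Fin n → Fin k → Bool) (i : Fin n) : Finset (Fin k) :=
  univ.filter fun j => M i j = true

noncomputable def rsum (M : Fin n → Fin k → Bool) (i : Fin n) : ℕ := (supp M i).card

noncomputable def rT (M : Fin n → Fin k → Bool) : Finset ℕ := univ.image (rsum M)

lemma rsum_mem_rT (M : Fin n → Fin k → Bool) (i : Fin n) : rsum M i ∈ rT M :=
  Finset.mem_image_of_mem _ (mem_univ i)

lemma mem_supp_iff {M : Fin n → Fin k → Bool} {i j} : j ∈ supp M i ↔ M i j = true := by
  simp [supp]

lemma supp_comparable {M : Fin n → Fin k → Bool} (hL : IsLonesum M) (i i' : Fin n) :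
    supp M i ⊆ supp M i' ∨ supp M i' ⊆ supp M i := by
  by_cases hii : i = i'
  · subst hii; left; exact Finset.Subset.refl _
  by_contra hc
  push_neg at hc
  obtain ⟨j₁, hj₁, hj₁'⟩ := Finset.not_subset.1 hc.1
  obtain ⟨j₂, hj₂, hj₂'⟩ := Finset.not_subset.1 hc.2
  have hjne : j₁ ≠ j₂ := by
    rintro rfl; exact hj₁' hj₂
  refine hL i i' j₁ j₂ hii hjne ⟨mem_supp_iff.1 hj₁, mem_supp_iff.1 hj₂, ?_, ?_⟩
  · simpa [mem_supp_iff] using hj₂'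
  · simpa [mem_supp_iff] using hj₁'

lemma supp_subset_iff {M : Fin n → Fin k → Bool} (hL : IsLonesum M) {i i' : Fin n} :
    supp M i ⊆ supp M i' ↔ rsum M i ≤ rsum M i' := by
  constructor
  · exact Finset.card_le_card
  · intro h
    rcases supp_comparable hL i i' with h' | h'
    · exact h'
    · have := Finset.eq_of_subset_of_card_le h' h
      rw [this]

lemma row_eq_of_rsum_eq {M : Fin n → Fin k → Bool} (hL : IsLonesum M) {i i' : Fin n}
    (h : rsum M i = rsum M i') : M i = M i' := by
  have h1 : supp M i = supp M i' :=
    Finset.eq_of_subset_of_card_le ((supp_subset_iff hL).2 h.le) h.ge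
  funext j
  have : (j ∈ supp M i) = (j ∈ supp M i') := by rw [h1]
  simp only [mem_supp_iff] at this
  cases hMij : M i j <;> cases hMij' : M i' j <;> simp_all

lemma up_closed {M : Fin n → Fin k → Bool} (hL : IsLonesum M) {i i' : Fin n} {j : Fin k}
    (hij : M i j = true) (h : rsum M i ≤ rsum M i') : M i' j = true :=
  mem_supp_iff.1 (((supp_subset_iff hL).2 h) (mem_supp_iff.2 hij))


/-! ### crux: reconstruction of a lonesum matrix from ranks -/

lemma bool_eq_decide {b : Bool} {p : Prop} [Decidable p] (h : b = true ↔ p) : b = decide p := by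
  by_cases hp : p
  · simp [hp, h.2 hp]
  · have hb : b ≠ true := fun hb => hp (h.1 hb)
    cases b
    · simp [hp]
    · exact absurd rfl hb

noncomputable def Acnt (M : Fin n → Fin k → Bool) (v : ℕ) : ℕ :=
  (univ.filter fun i => v ≤ rsum M i).card

lemma exists_threshold {M : Fin n → Fin k → Bool} (hL : IsLonesum M)
    (hcol : ∀ j, ∃ i, M i j = true) (j : Fin k) :
    ∃ v ∈ rT M, ∀ i, M i j = true ↔ v ≤ rsum M i := by
  obtain ⟨i₀, hi₀⟩ := hcol j
  have hne : (univ.filter fun i => M i j = true).Nonempty := ⟨i₀, by simp [hi₀]⟩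
  obtain ⟨i₁, hi₁mem, hi₁min⟩ := Finset.exists_min_image _ (rsum M) hne
  refine ⟨rsum M i₁, rsum_mem_rT M i₁, fun i => ⟨fun h => hi₁min i (by simp [h]),
    fun h => up_closed hL (Finset.mem_filter.1 hi₁mem).2 h⟩⟩

lemma exists_col {M : Fin n → Fin k → Bool} (hL : IsLonesum M)
    (hrow : ∀ i, ∃ j, M i j = true) {v : ℕ} (hv : v ∈ rT M) :
    ∃ j, ∀ i, M i j = true ↔ v ≤ rsum M i := by
  obtain ⟨i, -, rfl⟩ := Finset.mem_image.1 hv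
  set v := rsum M i with hvdef
  by_cases hP : ((rT M).filter (· < v)).Nonempty
  · obtain ⟨w, hwmem, hwmax⟩ := Finset.exists_max_image _ id hP
    simp only [Finset.mem_filter] at hwmem
    obtain ⟨i₂, -, hi₂⟩ := Finset.mem_image.1 hwmem.1
    have hnsub : ¬ supp M i ⊆ supp M i₂ := by
      intro hsub
      have := (supp_subset_iff hL).1 hsub
      rw [hi₂] at this; omega
    obtain ⟨j, hj, hj'⟩ := Finset.not_subset.1 hnsub
    refine ⟨j, fun i'' => ⟨?_, fun h => up_closed hL (mem_supp_iff.1 hj) h⟩⟩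
    intro h
    by_contra hc
    push_neg at hc
    have hle : rsum M i'' ≤ w := by
      have : rsum M i'' ∈ (rT M).filter (· < v) :=
        Finset.mem_filter.2 ⟨rsum_mem_rT M i'', by omega⟩
      simpa using hwmax _ this
    have : supp M i'' ⊆ supp M i₂ := (supp_subset_iff hL).2 (by rw [hi₂]; exact hle)
    exact hj' (this (mem_supp_iff.2 h))
  · obtain ⟨j, hj⟩ := hrow i
    refine ⟨j, fun i'' => ⟨fun _ => ?_, fun h => up_closed hL hj h⟩⟩
    by_contra hc
    push_neg at hc
    exact hP ⟨rsum M i'', Finset.mem_filter.2 ⟨rsum_mem_rT M i'', by omega⟩⟩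

lemma csum_eq {M : Fin n → Fin k → Bool} {j : Fin k} {v : ℕ}
    (h : ∀ i, M i j = true ↔ v ≤ rsum M i) : rsum (tr M) j = Acnt M v := by
  unfold rsum supp Acnt
  congr 1
  apply Finset.filter_congr
  intro i _
  simpa [tr] using h i

lemma Acnt_anti {M : Fin n → Fin k → Bool} {v w : ℕ} (hv : v ∈ rT M) (hvw : v < w) :
    Acnt M w < Acnt M v := by
  apply Finset.card_lt_card
  constructor
  · intro x hx
    simp only [Finset.mem_filter] at hx ⊢
    exact ⟨hx.1, by omega⟩
  · intro hsub
    obtain ⟨i, -, rfl⟩ := Finset.mem_image.1 hv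
    have hi : i ∈ univ.filter fun i' => rsum M i ≤ rsum M i' :=
      Finset.mem_filter.2 ⟨mem_univ i, le_refl _⟩
    have := hsub hi
    simp only [Finset.mem_filter] at this
    omega

lemma Acnt_injOn {M : Fin n → Fin k → Bool} :
    Set.InjOn (Acnt M) (rT M) := by
  intro u hu v hv h
  rcases lt_trichotomy u v with h' | h' | h'
  · have := Acnt_anti hu h'; omega
  · exact h'
  · have := Acnt_anti hv h'; omega

lemma rT_tr {M : Fin n → Fin k → Bool} (hL : IsLonesum M)
    (hrow : ∀ i, ∃ j, M i j = true) (hcol : ∀ j, ∃ i, M i j = true) :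
    rT (tr M) = (rT M).image (Acnt M) := by
  apply Finset.Subset.antisymm
  · intro c hc
    obtain ⟨j, -, rfl⟩ := Finset.mem_image.1 hc
    obtain ⟨v, hv, hthr⟩ := exists_threshold hL hcol j
    rw [csum_eq hthr]
    exact Finset.mem_image_of_mem _ hv
  · intro c hc
    obtain ⟨v, hv, rfl⟩ := Finset.mem_image.1 hc
    obtain ⟨j, hthr⟩ := exists_col hL hrow hv
    rw [← csum_eq hthr]
    exact rsum_mem_rT (tr M) j

lemma card_rT_tr {M : Fin n → Fin k → Bool} (hL : IsLonesum M)
    (hrow : ∀ i, ∃ j, M i j = true) (hcol : ∀ j, ∃ i, M i j = true) :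
    (rT (tr M)).card = (rT M).card := by
  rw [rT_tr hL hrow hcol, Finset.card_image_of_injOn Acnt_injOn]

lemma rk_tr_eq {M : Fin n → Fin k → Bool} (hL : IsLonesum M)
    (hrow : ∀ i, ∃ j, M i j = true) (hcol : ∀ j, ∃ i, M i j = true)
    {j : Fin k} {v : ℕ} (hv : v ∈ rT M) (hthr : ∀ i, M i j = true ↔ v ≤ rsum M i) :
    rkIn (rT (tr M)) (rsum (tr M) j) = ((rT M).filter (fun w => v < w)).card := by
  rw [csum_eq hthr]
  unfold rkIn
  rw [rT_tr hL hrow hcol, Finset.filter_image,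
    Finset.card_image_of_injOn (Acnt_injOn.mono (Finset.filter_subset _ _))]
  congr 1
  apply Finset.filter_congr
  intro w hw
  constructor
  · intro h
    by_contra hc
    push_neg at hc
    rcases eq_or_lt_of_le hc with h' | h'
    · subst h'; omega
    · have := Acnt_anti hw h'; omega
  · intro h; exact Acnt_anti hv h

lemma count_iff {T : Finset ℕ} {a v : ℕ} (ha : a ∈ T) (hv : v ∈ T) :
    v ≤ a ↔ T.card ≤ rkIn T a + (T.filter (fun w => v < w)).card + 1 := by
  constructor
  · intro h
    have hsub : T ⊆ (T.filter (· < a)) ∪ ((T.filter (fun w => v < w)) ∪ {v}) := by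
      intro w hw
      by_cases h1 : w < a
      · exact Finset.mem_union_left _ (Finset.mem_filter.2 ⟨hw, h1⟩)
      · apply Finset.mem_union_right
        by_cases h2 : v < w
        · exact Finset.mem_union_left _ (Finset.mem_filter.2 ⟨hw, h2⟩)
        · have : w = v := by omega
          subst this
          exact Finset.mem_union_right _ (Finset.mem_singleton_self _)
    calc T.card ≤ _ := Finset.card_le_card hsub
      _ ≤ _ := Finset.card_union_le _ _
      _ ≤ rkIn T a + ((T.filter (fun w => v < w)).card + 1) := by
          refine Nat.add_le_add (le_refl _) ?_
          refine le_trans (Finset.card_union_le _ _) ?_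
          simp
      _ = _ := by omega
  · intro h
    by_contra hc
    push_neg at hc
    have hd : Disjoint (T.filter (· < a)) (T.filter (fun w => v < w)) := by
      rw [Finset.disjoint_left]
      intro w hw1 hw2
      simp only [Finset.mem_filter] at hw1 hw2
      omega
    have hvnot : v ∉ (T.filter (· < a)) ∪ (T.filter (fun w => v < w)) := by
      simp only [Finset.mem_union, Finset.mem_filter]
      push_neg
      omega
    have hanot : a ∉ insert v ((T.filter (· < a)) ∪ (T.filter (fun w => v < w))) := by
      simp only [Finset.mem_insert, Finset.mem_union, Finset.mem_filter]
      push_neg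
      refine ⟨by omega, by omega, by omega⟩
    have hsub : insert a (insert v ((T.filter (· < a)) ∪ (T.filter (fun w => v < w)))) ⊆ T := by
      intro w hw
      simp only [Finset.mem_insert, Finset.mem_union, Finset.mem_filter] at hw
      rcases hw with rfl | rfl | h' | h'
      · exact ha
      · exact hv
      · exact h'.1
      · exact h'.1
    have hcard := Finset.card_le_card hsub
    rw [Finset.card_insert_of_notMem hanot, Finset.card_insert_of_notMem hvnot,
      Finset.card_union_of_disjoint hd] at hcard
    unfold rkIn at h
    omega

lemma crux {M : Fin n → Fin k → Bool} (hL : IsLonesum M)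
    (hrow : ∀ i, ∃ j, M i j = true) (hcol : ∀ j, ∃ i, M i j = true) (i : Fin n) (j : Fin k) :
    M i j = decide ((rT M).card ≤
      rkIn (rT M) (rsum M i) + rkIn (rT (tr M)) (rsum (tr M) j) + 1) := by
  obtain ⟨v, hv, hthr⟩ := exists_threshold hL hcol j
  apply bool_eq_decide
  rw [hthr i, rk_tr_eq hL hrow hcol hv hthr]
  exact count_iff (rsum_mem_rT M i) hv

/-! ### the staircase matrix attached to a pair of maps -/

def mk (m : ℕ) (f : Fin n → Fin m) (g : Fin k → Fin m) : Fin n → Fin k → Bool :=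
  fun i j => decide (m ≤ (f i : ℕ) + (g j : ℕ) + 1)

lemma mk_true_iff {m : ℕ} {f : Fin n → Fin m} {g : Fin k → Fin m} {i j} :
    mk m f g i j = true ↔ m ≤ (f i : ℕ) + (g j : ℕ) + 1 := by
  simp [mk]

lemma tr_mk {m : ℕ} {f : Fin n → Fin m} {g : Fin k → Fin m} :
    tr (mk m f g) = mk m g f := by
  funext j i
  simp only [tr, mk]
  exact decide_eq_decide.2 (by omega)

lemma mk_lonesum {m : ℕ} {f : Fin n → Fin m} {g : Fin k → Fin m} :
    IsLonesum (mk m f g) := by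
  rintro i₁ i₂ j₁ j₂ - - ⟨a, b, c, d⟩
  rw [mk_true_iff] at a b
  simp only [mk, decide_eq_false_iff_not] at c d
  omega

lemma mk_row {m : ℕ} {f : Fin n → Fin m} {g : Fin k → Fin m} (hg : Surjective g)
    (i : Fin n) : ∃ j, mk m f g i j = true := by
  have hm : (f i : ℕ) < m := (f i).isLt
  obtain ⟨j, hj⟩ := hg ⟨m - 1, by omega⟩
  have hj' : (g j : ℕ) = m - 1 := by rw [hj]
  exact ⟨j, mk_true_iff.2 (by omega)⟩

noncomputable def Rfun (m : ℕ) (g : Fin k → Fin m) (d : ℕ) : ℕ :=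
  (univ.filter fun j => m ≤ d + (g j : ℕ) + 1).card

lemma rsum_mk {m : ℕ} {f : Fin n → Fin m} {g : Fin k → Fin m} (i : Fin n) :
    rsum (mk m f g) i = Rfun m g (f i) := by
  unfold rsum supp Rfun
  congr 1
  apply Finset.filter_congr
  intro j _
  simp [mk]

lemma Rfun_strictMono {m : ℕ} {g : Fin k → Fin m} (hg : Surjective g) {d d' : ℕ}
    (hd' : d' < m) (h : d < d') : Rfun m g d < Rfun m g d' := by
  apply Finset.card_lt_card
  constructor
  · intro j hj
    simp only [Finset.mem_filter] at hj ⊢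
    exact ⟨hj.1, by omega⟩
  · intro hsub
    obtain ⟨j, hj⟩ := hg ⟨m - 1 - d', by omega⟩
    have h1 : j ∈ univ.filter fun j => m ≤ d' + (g j : ℕ) + 1 := by
      simp only [Finset.mem_filter, hj]
      refine ⟨mem_univ _, ?_⟩
      show m ≤ d' + (m - 1 - d') + 1
      omega
    have h3 := (Finset.mem_filter.1 (hsub h1)).2
    rw [hj] at h3
    have h4 : m ≤ d + (m - 1 - d') + 1 := h3
    omega

lemma Rfun_inj {m : ℕ} {g : Fin k → Fin m} (hg : Surjective g) :
    Injective (fun d : Fin m => Rfun m g d.val) := by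
  intro a b hab
  by_contra hne
  rcases lt_trichotomy (a : ℕ) (b : ℕ) with h | h | h
  · have := Rfun_strictMono hg b.isLt h; simp only [] at hab; omega
  · exact hne (Fin.ext h)
  · have := Rfun_strictMono hg a.isLt h; simp only [] at hab; omega

lemma rT_mk {m : ℕ} {f : Fin n → Fin m} {g : Fin k → Fin m} (hf : Surjective f) :
    rT (mk m f g) = (univ : Finset (Fin m)).image (fun d : Fin m => Rfun m g d.val) := by
  ext c
  simp only [rT, Finset.mem_image, mem_univ, true_and]
  constructor
  · rintro ⟨i, rfl⟩
    exact ⟨f i, (rsum_mk i).symm⟩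
  · rintro ⟨d, rfl⟩
    obtain ⟨i, rfl⟩ := hf d
    exact ⟨i, rsum_mk i⟩


lemma card_rT_mk {m : ℕ} {f : Fin n → Fin m} {g : Fin k → Fin m}
    (hf : Surjective f) (hg : Surjective g) : (rT (mk m f g)).card = m := by
  rw [rT_mk hf, Finset.card_image_of_injective _ (Rfun_inj hg), card_univ, Fintype.card_fin]

lemma rk_mk {m : ℕ} {f : Fin n → Fin m} {g : Fin k → Fin m}
    (hf : Surjective f) (hg : Surjective g) (i : Fin n) :
    rkIn (rT (mk m f g)) (rsum (mk m f g) i) = (f i : ℕ) := by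
  rw [rsum_mk, rT_mk hf]
  unfold rkIn
  rw [Finset.filter_image, Finset.card_image_of_injective _ (Rfun_inj hg)]
  have h2 : (univ.filter fun d : Fin m => Rfun m g d.val < Rfun m g (f i).val)
      = Finset.Iio (f i) := by
    ext d
    simp only [Finset.mem_filter, Finset.mem_Iio, mem_univ, true_and]
    constructor
    · intro h
      by_contra hc
      push_neg at hc
      rcases eq_or_lt_of_le hc with h' | h'
      · rw [← h'] at h; omega
      · have := Rfun_strictMono hg d.isLt h'
        omega
    · intro h
      exact Rfun_strictMono hg (f i).isLt h
  rw [h2, Fin.card_Iio]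

section SurjCount
variable {m : ℕ}

noncomputable def fiberF (f : Fin n → Fin m) (c : Fin m) : Finset (Fin n) :=
  univ.filter fun i => f i = c

lemma mem_fiberF {f : Fin n → Fin m} {c i} : i ∈ fiberF f c ↔ f i = c := by simp [fiberF]

lemma card_fiberF (f : Fin n → Fin m) (c : Fin m) :
    Nat.card {i // f i = c} = (fiberF f c).card := by
  rw [Nat.card_eq_fintype_card, fiberF]
  exact Fintype.card_subtype _

noncomputable def fiberPartition (f : Fin n → Fin m) (hf : Surjective f) :
    Finpartition (univ : Finset (Fin n)) where
  parts := univ.image (fiberF f)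
  supIndep := by
    rw [Finset.supIndep_iff_pairwiseDisjoint]
    intro b hb b' hb' hne
    simp only [Finset.coe_image, Set.mem_image] at hb hb'
    obtain ⟨c, -, rfl⟩ := hb
    obtain ⟨c', -, rfl⟩ := hb'
    have hcc : c ≠ c' := fun h => hne (by rw [h])
    show Disjoint (fiberF f c) (fiberF f c')
    rw [Finset.disjoint_left]
    intro i hi hi'
    rw [mem_fiberF] at hi hi'
    exact hcc (hi ▸ hi')
  sup_parts := by
    apply le_antisymm
    · exact Finset.sup_le fun b _ => Finset.subset_univ b
    · intro i _
      rw [Finset.mem_sup]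
      exact ⟨fiberF f (f i), Finset.mem_image_of_mem _ (mem_univ _), mem_fiberF.2 rfl⟩
  bot_notMem := by
    simp only [bot_eq_empty, Finset.mem_image]
    rintro ⟨c, -, hc⟩
    obtain ⟨i, hi⟩ := hf c
    have h2 : i ∈ fiberF f c := mem_fiberF.2 hi
    rw [hc] at h2
    simp at h2

lemma fiberPartition_parts (f : Fin n → Fin m) (hf : Surjective f) :
    (fiberPartition f hf).parts = univ.image (fiberF f) := rfl

lemma fiberF_injective {f : Fin n → Fin m} (hf : Surjective f) : Injective (fiberF f) := by
  intro c c' h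
  obtain ⟨i, hi⟩ := hf c
  have h1 : i ∈ fiberF f c := mem_fiberF.2 hi
  rw [h] at h1
  rw [mem_fiberF] at h1
  rw [← hi, h1]

lemma fiberPartition_card (f : Fin n → Fin m) (hf : Surjective f) :
    (fiberPartition f hf).parts.card = m := by
  rw [fiberPartition_parts, Finset.card_image_of_injective _ (fiberF_injective hf),
    card_univ, Fintype.card_fin]

lemma part_eq_fiberF {f : Fin n → Fin m} {hf : Surjective f} {b : Finset (Fin n)}
    (hb : b ∈ (fiberPartition f hf).parts) {x : Fin n} (hx : x ∈ b) :
    b = fiberF f (f x) := by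
  rw [fiberPartition_parts] at hb
  obtain ⟨c, -, rfl⟩ := Finset.mem_image.1 hb
  rw [mem_fiberF.1 hx]

/-- the partition-classifying key -/
noncomputable def pkey (f : Fin n → Fin m) : Finpartition (univ : Finset (Fin n)) :=
  if hf : Surjective f then fiberPartition f hf else ⊥

lemma pkey_surj {f : Fin n → Fin m} (hf : Surjective f) :
    pkey f = fiberPartition f hf := dif_pos hf

/-- labeling of parts by f -/
noncomputable def lab (f : Fin n → Fin m) (P : Finpartition (univ : Finset (Fin n)))
    (b : ↥P.parts) : Fin m :=
  f (P.nonempty_of_mem_parts b.2).choose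

lemma lab_spec {f : Fin n → Fin m} {hf : Surjective f}
    (hP : fiberPartition f hf = P) (b : ↥P.parts) {x : Fin n} (hx : x ∈ b.1) :
    f x = lab f P b := by
  have hb : b.1 ∈ (fiberPartition f hf).parts := by rw [hP]; exact b.2
  have h1 := part_eq_fiberF hb hx
  have hch : (P.nonempty_of_mem_parts b.2).choose ∈ b.1 :=
    (P.nonempty_of_mem_parts b.2).choose_spec
  have h2 : f (P.nonempty_of_mem_parts b.2).choose = f x := mem_fiberF.1 (h1 ▸ hch)
  exact h2.symm

lemma lab_bijective {f : Fin n → Fin m} {hf : Surjective f}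
    {P : Finpartition (univ : Finset (Fin n))} (hP : fiberPartition f hf = P) :
    Bijective (lab f P) := by
  constructor
  · intro b b' h
    have e1 : b.1 = fiberF f (lab f P b) := by
      have hb : b.1 ∈ (fiberPartition f hf).parts := by rw [hP]; exact b.2
      have hch : (P.nonempty_of_mem_parts b.2).choose ∈ b.1 :=
        (P.nonempty_of_mem_parts b.2).choose_spec
      exact part_eq_fiberF hb hch
    have e2 : b'.1 = fiberF f (lab f P b') := by
      have hb : b'.1 ∈ (fiberPartition f hf).parts := by rw [hP]; exact b'.2
      have hch : (P.nonempty_of_mem_parts b'.2).choose ∈ b'.1 :=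
        (P.nonempty_of_mem_parts b'.2).choose_spec
      exact part_eq_fiberF hb hch
    exact Subtype.ext (by rw [e1, e2, h])
  · intro c
    have hb : fiberF f c ∈ P.parts := by
      rw [← hP, fiberPartition_parts]
      exact Finset.mem_image_of_mem _ (mem_univ c)
    refine ⟨⟨fiberF f c, hb⟩, ?_⟩
    have hch : (P.nonempty_of_mem_parts hb).choose ∈ fiberF f c :=
      (P.nonempty_of_mem_parts hb).choose_spec
    exact (mem_fiberF.1 hch)



lemma lab_bij_of_mem {P : Finpartition (univ : Finset (Fin n))} (f : Fin n → Fin m)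
    (hf : f ∈ univ.filter (fun f : Fin n → Fin m => Surjective f ∧ pkey f = P)) :
    Bijective (lab f P) := by
  obtain ⟨-, hs, hk⟩ := Finset.mem_filter.1 hf
  exact lab_bijective ((pkey_surj hs).symm.trans hk)

theorem card_surjections (S : Set ℕ) (n m : ℕ) :
    Nat.card {f : Fin n → Fin m // Surjective f ∧ ∀ c, Nat.card {i // f i = c} ∈ S}
      = m.factorial * sStirling S n m := by
  classical
  -- convert Nat.card of subtypes to Finset cards
  rw [sStirling, Nat.card_eq_fintype_card, Nat.card_eq_fintype_card,
    Fintype.card_subtype, Fintype.card_subtype]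
  set A : Finset (Fin n → Fin m) :=
    univ.filter (fun f => Surjective f ∧ ∀ c, Nat.card {i // f i = c} ∈ S) with hA
  set B : Finset (Finpartition (univ : Finset (Fin n))) :=
    univ.filter (fun P => P.parts.card = m ∧ ∀ b ∈ P.parts, b.card ∈ S) with hB
  have hkey : ∀ f ∈ A, pkey f ∈ B := by
    intro f hf
    rw [hA, Finset.mem_filter] at hf
    obtain ⟨-, hsurj, hS⟩ := hf
    rw [pkey_surj hsurj, hB, Finset.mem_filter]
    refine ⟨mem_univ _, fiberPartition_card f hsurj, ?_⟩
    intro b hb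
    rw [fiberPartition_parts] at hb
    obtain ⟨c, -, rfl⟩ := Finset.mem_image.1 hb
    rw [← card_fiberF]
    exact hS c
  rw [Finset.card_eq_sum_card_fiberwise hkey]
  have hfib : ∀ P ∈ B, (A.filter fun f => pkey f = P).card = m.factorial := by
    intro P hPB
    rw [hB, Finset.mem_filter] at hPB
    obtain ⟨-, hPcard, hPS⟩ := hPB
    -- simplify the filter
    have hCeq : (A.filter fun f => pkey f = P)
        = univ.filter (fun f : Fin n → Fin m => Surjective f ∧ pkey f = P) := by
      ext f
      simp only [hA, Finset.mem_filter, mem_univ, true_and]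
      constructor
      · rintro ⟨⟨hsurj, -⟩, hk⟩; exact ⟨hsurj, hk⟩
      · rintro ⟨hsurj, hk⟩
        refine ⟨⟨hsurj, ?_⟩, hk⟩
        intro c
        rw [card_fiberF]
        apply hPS
        rw [← hk, pkey_surj hsurj, fiberPartition_parts]
        exact Finset.mem_image_of_mem _ (mem_univ c)
    rw [hCeq]
    have hEcard : Fintype.card (↥P.parts ≃ Fin m) = m.factorial := by
      have e : ↥P.parts ≃ Fin m := P.parts.equivFin.trans (finCongr hPcard)
      rw [Fintype.card_equiv e, Fintype.card_coe, hPcard]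
    rw [← hEcard, ← Finset.card_univ]
    refine Finset.card_bij'
      (fun f hf => Equiv.ofBijective (lab f P) (lab_bij_of_mem f hf))
      (fun e _ => fun x => e ⟨P.part x, P.part_mem.2 (mem_univ x)⟩)
      (fun _ _ => mem_univ _) ?_ ?_ ?_
    · -- the inverse lands in the filter
      intro e _
      have hsurj : Surjective (fun x => (e ⟨P.part x, P.part_mem.2 (mem_univ x)⟩ : Fin m)) := by
        intro c
        obtain ⟨x, hx⟩ := P.nonempty_of_mem_parts (e.symm c).2
        refine ⟨x, ?_⟩
        have hpart : P.part x = (e.symm c).1 := P.part_eq_of_mem (e.symm c).2 hx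
        have hsub : (⟨P.part x, P.part_mem.2 (mem_univ x)⟩ : ↥P.parts) = e.symm c :=
          Subtype.ext hpart
        show e ⟨P.part x, P.part_mem.2 (mem_univ x)⟩ = c
        rw [hsub, Equiv.apply_symm_apply]
      rw [Finset.mem_filter]
      refine ⟨mem_univ _, hsurj, ?_⟩
      rw [pkey_surj hsurj]
      apply Finpartition.ext
      rw [fiberPartition_parts]
      have hfib : ∀ c, fiberF (fun x => (e ⟨P.part x, P.part_mem.2 (mem_univ x)⟩ : Fin m)) c
          = (e.symm c).1 := by
        intro c
        ext x
        rw [mem_fiberF]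
        constructor
        · intro h
          have : (⟨P.part x, P.part_mem.2 (mem_univ x)⟩ : ↥P.parts) = e.symm c := by
            rw [← h, Equiv.symm_apply_apply]
          have hx : x ∈ P.part x := P.mem_part (mem_univ x)
          rw [← Subtype.ext_iff.1 this]
          exact hx
        · intro hx
          have hpart : P.part x = (e.symm c).1 := P.part_eq_of_mem (e.symm c).2 hx
          have hsub : (⟨P.part x, P.part_mem.2 (mem_univ x)⟩ : ↥P.parts) = e.symm c :=
            Subtype.ext hpart
          rw [hsub, Equiv.apply_symm_apply]
      ext b
      rw [Finset.mem_image]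
      constructor
      · rintro ⟨c, -, rfl⟩
        rw [hfib]
        exact (e.symm c).2
      · intro hb
        refine ⟨e ⟨b, hb⟩, mem_univ _, ?_⟩
        rw [hfib, Equiv.symm_apply_apply]
    · -- left inverse
      intro f hf
      obtain ⟨-, hs, hk⟩ := Finset.mem_filter.1 hf
      have hP : fiberPartition f hs = P := (pkey_surj hs).symm.trans hk
      funext x
      exact (lab_spec hP ⟨P.part x, P.part_mem.2 (mem_univ x)⟩ (P.mem_part (mem_univ x))).symm
    · -- right inverse
      intro e he
      apply Equiv.ext
      intro b
      show lab (fun x => e ⟨P.part x, P.part_mem.2 (mem_univ x)⟩) P b = e b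
      have hch : (P.nonempty_of_mem_parts b.2).choose ∈ b.1 :=
        (P.nonempty_of_mem_parts b.2).choose_spec
      have hpart : P.part (P.nonempty_of_mem_parts b.2).choose = b.1 :=
        P.part_eq_of_mem b.2 hch
      show e ⟨P.part (P.nonempty_of_mem_parts b.2).choose,
        P.part_mem.2 (mem_univ _)⟩ = e b
      congr 1
      exact Subtype.ext hpart
  rw [Finset.sum_congr rfl hfib, Finset.sum_const, smul_eq_mul, mul_comm]

end SurjCount

section Assembly
variable {S₁ S₂ : Set ℕ}

lemma mk_row_eq_iff {m : ℕ} {f : Fin n → Fin m} {g : Fin k → Fin m}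
    (hf : Surjective f) (hg : Surjective g) (i i' : Fin n) :
    mk m f g i' = mk m f g i ↔ f i' = f i := by
  constructor
  · intro h
    have hr : rsum (mk m f g) i' = rsum (mk m f g) i := by
      unfold rsum supp
      rw [h]
    apply Fin.ext
    rw [← rk_mk hf hg i', ← rk_mk hf hg i, hr]
  · intro h
    funext j
    simp only [mk, h]

lemma rk_fiber_iff {M : Fin n → Fin k → Bool} (hL : IsLonesum M) (i i' : Fin n) :
    rkIn (rT M) (rsum M i') = rkIn (rT M) (rsum M i) ↔ M i' = M i := by
  constructor
  · intro h
    exact row_eq_of_rsum_eq hL (rkIn_inj (rsum_mem_rT M i') (rsum_mem_rT M i) h)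
  · intro h
    have : rsum M i' = rsum M i := by
      unfold rsum supp
      rw [h]
    rw [this]

lemma mk_props {m : ℕ} {f : Fin n → Fin m} {g : Fin k → Fin m}
    (hf : Surjective f) (hfS : ∀ c, Nat.card {i // f i = c} ∈ S₁)
    (hg : Surjective g) (hgS : ∀ c, Nat.card {j // g j = c} ∈ S₂) :
    IsLonesum (mk m f g) ∧
      (∀ i, ∃ j, mk m f g i j = true) ∧ (∀ j, ∃ i, mk m f g i j = true) ∧
      (∀ i : Fin n, Nat.card {i' : Fin n // mk m f g i' = mk m f g i} ∈ S₁) ∧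
      (∀ j : Fin k, Nat.card
        {j' : Fin k // (fun i => mk m f g i j') = fun i => mk m f g i j} ∈ S₂) := by
  refine ⟨mk_lonesum, fun i => mk_row hg i, fun j => ?_, fun i => ?_, fun j => ?_⟩
  · obtain ⟨i, hi⟩ := mk_row (f := g) (g := f) hf j
    rw [← tr_mk] at hi
    exact ⟨i, hi⟩
  · rw [Nat.card_congr (Equiv.subtypeEquivRight (fun i' => mk_row_eq_iff hf hg i i'))]
    exact hfS (f i)
  · have hcoliff : ∀ j' : Fin k,
        ((fun i => mk m f g i j') = fun i => mk m f g i j) ↔ g j' = g j := by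
      intro j'
      have h1 : ((fun i => mk m f g i j') = fun i => mk m f g i j)
          ↔ mk m g f j' = mk m g f j := by
        rw [← tr_mk]
        exact Iff.rfl
      rw [h1]
      exact mk_row_eq_iff hg hf j j'
    rw [Nat.card_congr (Equiv.subtypeEquivRight hcoliff)]
    exact hgS (g j)

/-- the pairs side -/
abbrev Pairs (S₁ S₂ : Set ℕ) (n k : ℕ) : Type :=
  Σ m : Fin (min n k + 1),
    ({f : Fin n → Fin (m : ℕ) // Surjective f ∧ ∀ c, Nat.card {i // f i = c} ∈ S₁} ×
     {g : Fin k → Fin (m : ℕ) // Surjective g ∧ ∀ c, Nat.card {j // g j = c} ∈ S₂})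

abbrev Mats (S₁ S₂ : Set ℕ) (n k : ℕ) : Type :=
  {M : Fin n → Fin k → Bool // IsLonesum M ∧
      (∀ i, ∃ j, M i j = true) ∧ (∀ j, ∃ i, M i j = true) ∧
      (∀ i : Fin n, Nat.card {i' : Fin n // M i' = M i} ∈ S₁) ∧
      (∀ j : Fin k, Nat.card {j' : Fin k // (fun i => M i j') = fun i => M i j} ∈ S₂)}

noncomputable def Phi (S₁ S₂ : Set ℕ) (n k : ℕ) : Pairs S₁ S₂ n k → Mats S₁ S₂ n k :=
  fun x => ⟨mk (x.1 : ℕ) x.2.1.1 x.2.2.1,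
    mk_props x.2.1.2.1 x.2.1.2.2 x.2.2.2.1 x.2.2.2.2⟩

lemma Phi_injective : Injective (Phi S₁ S₂ n k) := by
  rintro ⟨⟨m₁, hm₁⟩, ⟨f₁, hf₁, hfS₁⟩, ⟨g₁, hg₁, hgS₁⟩⟩
    ⟨⟨m₂, hm₂⟩, ⟨f₂, hf₂, hfS₂⟩, ⟨g₂, hg₂, hgS₂⟩⟩ h
  have hM : mk m₁ f₁ g₁ = mk m₂ f₂ g₂ := congrArg Subtype.val h
  have hm : m₁ = m₂ := by
    have e1 := card_rT_mk hf₁ hg₁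
    have e2 := card_rT_mk hf₂ hg₂
    rw [hM] at e1
    exact e1.symm.trans e2
  subst hm
  have hfeq : f₁ = f₂ := by
    funext i
    apply Fin.ext
    rw [← rk_mk hf₁ hg₁ i, ← rk_mk hf₂ hg₂ i, hM]
  have hgeq : g₁ = g₂ := by
    have hMt := congrArg tr hM
    rw [tr_mk, tr_mk] at hMt
    funext j
    apply Fin.ext
    rw [← rk_mk hg₁ hf₁ j, ← rk_mk hg₂ hf₂ j, hMt]
  subst hfeq
  subst hgeq
  rfl

lemma Phi_surjective : Surjective (Phi S₁ S₂ n k) := by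
  rintro ⟨M, hL, hrow, hcol, hS₁, hS₂⟩
  have hLt : IsLonesum (tr M) := lonesum_tr hL
  set mv : ℕ := (rT M).card with hmv
  have hmn : mv ≤ n := by
    calc mv ≤ (univ : Finset (Fin n)).card := Finset.card_image_le
      _ = n := by rw [card_univ, Fintype.card_fin]
  have hmk : mv ≤ k := by
    rw [hmv, ← card_rT_tr hL hrow hcol]
    calc (rT (tr M)).card ≤ (univ : Finset (Fin k)).card := Finset.card_image_le
      _ = k := by rw [card_univ, Fintype.card_fin]
  have hmlt : mv < min n k + 1 := by omega
  -- the row map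
  have hfv : ∀ i, rkIn (rT M) (rsum M i) < mv := fun i => rkIn_lt_card (rsum_mem_rT M i)
  set f : Fin n → Fin mv := fun i => ⟨rkIn (rT M) (rsum M i), hfv i⟩ with hfdef
  have hf : Surjective f := by
    rintro ⟨t, ht⟩
    obtain ⟨v, hv, hrk⟩ := rkIn_surj ht
    obtain ⟨i, -, rfl⟩ := Finset.mem_image.1 hv
    exact ⟨i, Fin.ext hrk⟩
  have hfS : ∀ c, Nat.card {i // f i = c} ∈ S₁ := by
    intro c
    obtain ⟨i₀, rfl⟩ := hf c
    have hiff : ∀ i', f i' = f i₀ ↔ M i' = M i₀ := by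
      intro i'
      rw [Fin.ext_iff]
      exact rk_fiber_iff hL i₀ i'
    rw [Nat.card_congr (Equiv.subtypeEquivRight hiff)]
    exact hS₁ i₀
  -- the column map
  have hgv : ∀ j, rkIn (rT (tr M)) (rsum (tr M) j) < mv := by
    intro j
    rw [hmv, ← card_rT_tr hL hrow hcol]
    exact rkIn_lt_card (rsum_mem_rT (tr M) j)
  set g : Fin k → Fin mv := fun j => ⟨rkIn (rT (tr M)) (rsum (tr M) j), hgv j⟩ with hgdef
  have hg : Surjective g := by
    rintro ⟨t, ht⟩
    have ht' : t < (rT (tr M)).card := by rw [card_rT_tr hL hrow hcol]; omega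
    obtain ⟨v, hv, hrk⟩ := rkIn_surj ht'
    obtain ⟨j, -, rfl⟩ := Finset.mem_image.1 hv
    exact ⟨j, Fin.ext hrk⟩
  have hgS : ∀ c, Nat.card {j // g j = c} ∈ S₂ := by
    intro c
    obtain ⟨j₀, rfl⟩ := hg c
    have hiff : ∀ j', g j' = g j₀ ↔ ((fun i => M i j') = fun i => M i j₀) := by
      intro j'
      rw [Fin.ext_iff]
      exact rk_fiber_iff hLt j₀ j'
    rw [Nat.card_congr (Equiv.subtypeEquivRight hiff)]
    exact hS₂ j₀
  refine ⟨⟨⟨mv, hmlt⟩, ⟨f, hf, hfS⟩, ⟨g, hg, hgS⟩⟩, ?_⟩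
  apply Subtype.ext
  show mk mv f g = M
  funext i j
  rw [show mk mv f g i j = decide (mv ≤ rkIn (rT M) (rsum M i)
      + rkIn (rT (tr M)) (rsum (tr M) j) + 1) from rfl]
  exact (crux hL hrow hcol i j).symm

end Assembly

end LonesumAux

open LonesumAux

/-- the number of `n × k` lonesum 0-1 matrices without all-zero rows or
columns, in which the number of rows of each type lies in `S₁` and the number of columns
of each type lies in `S₂`, equals `∑_m m! {n brace m}_{S₁} · m! {k brace m}_{S₂}`. -/
theorem card_restricted_lonesum (S₁ S₂ : Set ℕ) (h₁ : 0 ∉ S₁) (h₂ : 0 ∉ S₂) (n k : ℕ) :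
    Nat.card {M : Fin n → Fin k → Bool // IsLonesum M ∧
      (∀ i, ∃ j, M i j = true) ∧ (∀ j, ∃ i, M i j = true) ∧
      (∀ i : Fin n, Nat.card {i' : Fin n // M i' = M i} ∈ S₁) ∧
      (∀ j : Fin k, Nat.card {j' : Fin k // (fun i => M i j') = fun i => M i j} ∈ S₂)} =
    ∑ m ∈ Finset.range (min n k + 1),
      m.factorial * sStirling S₁ n m * (m.factorial * sStirling S₂ k m) := by
  classical
  have hbij : Function.Bijective (Phi S₁ S₂ n k) := ⟨Phi_injective, Phi_surjective⟩
  have hcard : Nat.card (Pairs S₁ S₂ n k) = Nat.card (Mats S₁ S₂ n k) :=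
    Nat.card_eq_of_bijective _ hbij
  show Nat.card (Mats S₁ S₂ n k) = _
  rw [← hcard]
  have h2 : Nat.card (Pairs S₁ S₂ n k) = ∑ m : Fin (min n k + 1),
      (Nat.card {f : Fin n → Fin (m : ℕ) // Function.Surjective f ∧
          ∀ c, Nat.card {i // f i = c} ∈ S₁}) *
      (Nat.card {g : Fin k → Fin (m : ℕ) // Function.Surjective g ∧
          ∀ c, Nat.card {j // g j = c} ∈ S₂}) := by
    rw [Nat.card_eq_fintype_card, Fintype.card_sigma]
    apply Finset.sum_congr rfl
    intro m _
    rw [Fintype.card_prod, ← Nat.card_eq_fintype_card, ← Nat.card_eq_fintype_card]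
  rw [h2]
  have h3 : ∀ m : Fin (min n k + 1),
      (Nat.card {f : Fin n → Fin (m : ℕ) // Function.Surjective f ∧
          ∀ c, Nat.card {i // f i = c} ∈ S₁}) *
      (Nat.card {g : Fin k → Fin (m : ℕ) // Function.Surjective g ∧
          ∀ c, Nat.card {j // g j = c} ∈ S₂})
      = (m : ℕ).factorial * sStirling S₁ n (m : ℕ) *
        ((m : ℕ).factorial * sStirling S₂ k (m : ℕ)) := by
    intro m
    rw [card_surjections S₁ n (m : ℕ), card_surjections S₂ k (m : ℕ)]
  rw [Finset.sum_congr rfl (fun m _ => h3 m)]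
  exact Fin.sum_univ_eq_sum_range
    (fun m => m.factorial * sStirling S₁ n m * (m.factorial * sStirling S₂ k m)) _
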